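/- Let k ≥ 1 and let A, B, γ, η : Fin k → ℝ with ⟨A,γ⟩ > 0, ⟨B,γ⟩ > 0, ⟨A,η⟩ ≥ 0 and ⟨B,η⟩ ≥ 0. Set C = max (⟨A,γ⟩/⟨B,γ⟩) (⟨B,γ⟩/⟨A,γ⟩) and suppose ⟨B,η⟩/⟨B,γ⟩ ≥ ⟨A,η⟩/⟨A,γ⟩. Then the function F(t) = ⟨A_t,η⟩/⟨A_t,γ⟩ satisfies 0 ≤ F′(t) ≤ C·(⟨B,η⟩/⟨B,γ⟩) for every t ∈ [0,1], and consequently for every t ∈ [0,1]: ⟨A_t,η⟩/⟨A_t,γ⟩ ≥ (⟨B,η⟩/⟨B,γ⟩)·(1 − C·(1−t)). -/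

import Mathlib

lemma key_scalar (a b p q t C : ℝ) (ha : 0 < a) (hb : 0 < b)
    (hp : 0 ≤ p) (hq : 0 ≤ q) (hC : C = max (a / b) (b / a))
    (hm : p / a ≤ q / b) (ht0 : 0 ≤ t) (ht1 : t ≤ 1) :
    (0 < t * b + (1 - t) * a) ∧ (0 ≤ q * a - p * b) ∧
      (a ≤ C * (t * b + (1 - t) * a)) ∧
      (a * b ≤ C * (t * b + (1 - t) * a) ^ 2) := by
  have hqa : p * b ≤ q * a := (div_le_div_iff₀ ha hb).mp hm
  have hC0 : 0 ≤ C := le_trans (by positivity) (hC ▸ le_max_left _ _)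
  have hD : 0 < t * b + (1 - t) * a := by
    rcases le_total a b with h | h
    · nlinarith [mul_nonneg ht0 (sub_nonneg.2 h)]
    · nlinarith [mul_nonneg (sub_nonneg.2 ht1) (sub_nonneg.2 h)]
  refine ⟨hD, by linarith, ?_⟩
  rcases le_total a b with h | h
  · have hC1 : (1:ℝ) ≤ C := le_trans (by rw [le_div_iff₀ ha]; linarith)
      (hC ▸ le_max_right _ _)
    have hDa : a ≤ t * b + (1 - t) * a := by nlinarith
    have hCa : b ≤ C * a := by
      have : b / a ≤ C := hC ▸ le_max_right _ _
      rw [div_le_iff₀ ha] at this; linarith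
    constructor
    · nlinarith
    · nlinarith [mul_nonneg hC0 (sq_nonneg (t * b + (1 - t) * a - a))]
  · have hCb : a ≤ C * b := by
      have : a / b ≤ C := hC ▸ le_max_left _ _
      rw [div_le_iff₀ hb] at this; linarith
    have hDb : b ≤ t * b + (1 - t) * a := by nlinarith
    constructor
    · nlinarith
    · nlinarith [mul_nonneg hC0 (sq_nonneg (t * b + (1 - t) * a - b))]


/-- Lemma 6.5 of the paper: along the segment `A_t = t•B + (1-t)•A`, with
`C = max (⟨A,γ⟩/⟨B,γ⟩) (⟨B,γ⟩/⟨A,γ⟩)` and assuming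
`⟨B,η⟩/⟨B,γ⟩ ≥ ⟨A,η⟩/⟨A,γ⟩`, the stretching factor `F(t) = ⟨A_t,η⟩/⟨A_t,γ⟩`
has derivative between `0` and `C·⟨B,η⟩/⟨B,γ⟩`, and consequently
`F(t) ≥ (⟨B,η⟩/⟨B,γ⟩)·(1 − C·(1−t))` on `[0,1]`. -/
theorem stretching_factor_deriv_bound
    (k : ℕ) (hk : 1 ≤ k) (A B γ η : Fin k → ℝ)
    (hAγ : 0 < ∑ i, A i * γ i) (hBγ : 0 < ∑ i, B i * γ i)
    (hAη : 0 ≤ ∑ i, A i * η i) (hBη : 0 ≤ ∑ i, B i * η i)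
    (C : ℝ)
    (hC : C = max ((∑ i, A i * γ i) / (∑ i, B i * γ i))
                   ((∑ i, B i * γ i) / (∑ i, A i * γ i)))
    (hmono : (∑ i, B i * η i) / (∑ i, B i * γ i) ≥
             (∑ i, A i * η i) / (∑ i, A i * γ i)) :
    (∀ t ∈ Set.Icc (0:ℝ) 1,
      ∃ d : ℝ,
        HasDerivAt
          (fun s : ℝ =>
            (∑ i, (s * B i + (1 - s) * A i) * η i) /
            (∑ i, (s * B i + (1 - s) * A i) * γ i))
          d t ∧
        0 ≤ d ∧ d ≤ C * ((∑ i, B i * η i) / (∑ i, B i * γ i))) ∧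
    (∀ t ∈ Set.Icc (0:ℝ) 1,
      (∑ i, (t * B i + (1 - t) * A i) * η i) /
        (∑ i, (t * B i + (1 - t) * A i) * γ i) ≥
      ((∑ i, B i * η i) / (∑ i, B i * γ i)) * (1 - C * (1 - t))) := by
  set a := ∑ i, A i * γ i with ha_def
  set b := ∑ i, B i * γ i with hb_def
  set p := ∑ i, A i * η i with hp_def
  set q := ∑ i, B i * η i with hq_def
  have hsum : ∀ (v : Fin k → ℝ) (s : ℝ),
      ∑ i, (s * B i + (1 - s) * A i) * v i
        = s * (∑ i, B i * v i) + (1 - s) * (∑ i, A i * v i) := by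
    intro v s
    rw [Finset.mul_sum, Finset.mul_sum, ← Finset.sum_add_distrib]
    exact Finset.sum_congr rfl fun i _ => by ring
  simp only [hsum]
  constructor
  · rintro t ⟨ht0, ht1⟩
    obtain ⟨hD, hd0, hDC, hab⟩ :=
      key_scalar a b p q t C hAγ hBγ hAη hBη hC hmono ht0 ht1
    refine ⟨(q * a - p * b) / (t * b + (1 - t) * a) ^ 2, ?_, ?_, ?_⟩
    · have h1 : HasDerivAt (fun s : ℝ => s * q + (1 - s) * p) (q - p) t := by
        have := ((hasDerivAt_id t).mul_const q).add
          (((hasDerivAt_const t (1:ℝ)).sub (hasDerivAt_id t)).mul_const p)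
        exact this.congr_deriv (by ring)
      have h2 : HasDerivAt (fun s : ℝ => s * b + (1 - s) * a) (b - a) t := by
        have := ((hasDerivAt_id t).mul_const b).add
          (((hasDerivAt_const t (1:ℝ)).sub (hasDerivAt_id t)).mul_const a)
        exact this.congr_deriv (by ring)
      have h := h1.div h2 hD.ne'
      exact h.congr_deriv (by ring)
    · positivity
    · rw [div_le_iff₀ (by positivity), mul_div_assoc']
      rw [div_mul_eq_mul_div, le_div_iff₀ hBγ]
      nlinarith [mul_le_mul_of_nonneg_left hab hBη,
        mul_nonneg (mul_nonneg hAη hBγ.le) hBγ.le]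
  · rintro t ⟨ht0, ht1⟩
    obtain ⟨hD, hd0, hDC, hab⟩ :=
      key_scalar a b p q t C hAγ hBγ hAη hBη hC hmono ht0 ht1
    rw [← ha_def, ← hb_def, ← hp_def, ← hq_def, ge_iff_le, mul_comm,
      mul_div_assoc', div_le_div_iff₀ hBγ hD]
    nlinarith [mul_le_mul_of_nonneg_left hDC hBη,
      mul_nonneg (mul_nonneg hAη hBγ.le) (sub_nonneg.2 ht1)]
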